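/- Let K be a field of characteristic 2 and let A be the quotient of the free associative K-algebra K⟨a, b⟩ by the two-sided ideal generated by a², b² − b, and ab − ba − a. Let ω be the two-sided ideal of A generated by the images of a and b. Then for all w, x, y, z ∈ ω, wxyz = wyxz (i.e., ω satisfies the semigroup identity wxyz − wyxz = 0). -/
import Mathlib

/-- The two-sided ideal of the free associative algebra `K⟨a, b⟩` generated by the
relations `a²`, `b² − b` and `ab − ba − a` (where `a, b` are the two generators). -/
noncomputable def relationsIdeal (K : Type*) [Field K] :
    TwoSidedIdeal (FreeAlgebra K (Fin 2)) :=
  TwoSidedIdeal.span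
    {FreeAlgebra.ι K 0 * FreeAlgebra.ι K 0,
     FreeAlgebra.ι K 1 * FreeAlgebra.ι K 1 - FreeAlgebra.ι K 1,
     FreeAlgebra.ι K 0 * FreeAlgebra.ι K 1 - FreeAlgebra.ι K 1 * FreeAlgebra.ι K 0
       - FreeAlgebra.ι K 0}

/-- The algebra `A = K⟨a, b⟩ / (a², b² − b, ab − ba − a)`, i.e. the restricted enveloping
algebra of the 2-dimensional restricted Lie algebra with `[a,b] = a`, `a^[2] = 0`,
`b^[2] = b`. -/
noncomputable abbrev EnvAlgebra (K : Type*) [Field K] :=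
  (relationsIdeal K).ringCon.Quotient

/-- The image of the generator `a` in `A`. -/
noncomputable def abar (K : Type*) [Field K] : EnvAlgebra K :=
  (relationsIdeal K).ringCon.mk' (FreeAlgebra.ι K 0)

/-- The image of the generator `b` in `A`. -/
noncomputable def bbar (K : Type*) [Field K] : EnvAlgebra K :=
  (relationsIdeal K).ringCon.mk' (FreeAlgebra.ι K 1)

/-- The two-sided ideal `ω` of `A` generated by the images of `a` and `b`
(the augmentation ideal of the restricted enveloping algebra). -/
noncomputable def omegaIdeal (K : Type*) [Field K] : TwoSidedIdeal (EnvAlgebra K) :=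
  TwoSidedIdeal.span {abar K, bbar K}

namespace OmegaProof

variable {K : Type*} [Field K]

lemma mk'_surjective :
    Function.Surjective ((relationsIdeal K).ringCon.mk') :=
  fun q => Quotient.inductionOn' q fun x => ⟨x, rfl⟩

noncomputable instance : Module K (EnvAlgebra K) :=
  Function.Surjective.module K ((relationsIdeal K).ringCon.mk').toAddMonoidHom
    mk'_surjective (fun _ _ => rfl)

lemma quot_eq {x y : FreeAlgebra K (Fin 2)} (h : x - y ∈ relationsIdeal K) :
    (relationsIdeal K).ringCon.mk' x = (relationsIdeal K).ringCon.mk' y :=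
  (RingCon.eq _).mpr (((relationsIdeal K).rel_iff x y).mpr h)

lemma haa : abar K * abar K = 0 := by
  have h : (relationsIdeal K).ringCon.mk' (FreeAlgebra.ι K 0 * FreeAlgebra.ι K 0)
      = (relationsIdeal K).ringCon.mk' 0 := by
    refine quot_eq ?_
    rw [sub_zero]
    exact TwoSidedIdeal.subset_span (by simp [relationsIdeal])
  rw [abar, ← map_mul, h, map_zero]

lemma hbb : bbar K * bbar K = bbar K := by
  have h : (relationsIdeal K).ringCon.mk' (FreeAlgebra.ι K 1 * FreeAlgebra.ι K 1)
      = (relationsIdeal K).ringCon.mk' (FreeAlgebra.ι K 1) := by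
    refine quot_eq ?_
    exact TwoSidedIdeal.subset_span (by simp [relationsIdeal])
  rw [bbar, ← map_mul, h]

lemma hab0 : abar K * bbar K - bbar K * abar K - abar K = 0 := by
  have h : (relationsIdeal K).ringCon.mk'
      (FreeAlgebra.ι K 0 * FreeAlgebra.ι K 1 - FreeAlgebra.ι K 1 * FreeAlgebra.ι K 0
        - FreeAlgebra.ι K 0)
      = (relationsIdeal K).ringCon.mk' 0 := by
    refine quot_eq ?_
    rw [sub_zero]
    exact TwoSidedIdeal.subset_span (by simp)
  rw [map_sub, map_sub, map_mul, map_mul, map_zero] at h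
  exact h

lemma hab : abar K * bbar K = bbar K * abar K + abar K := by
  have h := hab0 (K := K)
  rw [sub_sub] at h
  exact sub_eq_zero.mp h

lemma l_ba : bbar K * abar K = abar K * bbar K - abar K := by
  rw [hab]; abel

lemma laab : abar K * (abar K * bbar K) = 0 := by
  rw [← mul_assoc, haa, zero_mul]

lemma laba : (abar K * bbar K) * abar K = 0 := by
  rw [mul_assoc, l_ba, mul_sub, laab, haa, sub_zero]

lemma lbab : bbar K * (abar K * bbar K) = 0 := by
  rw [← mul_assoc, l_ba, sub_mul, mul_assoc, hbb, sub_self]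

lemma labb : (abar K * bbar K) * bbar K = abar K * bbar K := by
  rw [mul_assoc, hbb]

lemma labab : (abar K * bbar K) * (abar K * bbar K) = 0 := by
  rw [mul_assoc, lbab, mul_zero]

/-- `M = span{a, b, ab}` -/
noncomputable abbrev M (K : Type*) [Field K] : Submodule K (EnvAlgebra K) :=
  Submodule.span K {abar K, bbar K, abar K * bbar K}

/-- `N = span{1, a, b, ab}` -/
noncomputable abbrev N (K : Type*) [Field K] : Submodule K (EnvAlgebra K) :=
  Submodule.span K {1, abar K, bbar K, abar K * bbar K}

/-- `P = span{a, ab}` -/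
noncomputable abbrev P (K : Type*) [Field K] : Submodule K (EnvAlgebra K) :=
  Submodule.span K {abar K, abar K * bbar K}

lemma haM : abar K ∈ M K := Submodule.subset_span (by simp)
lemma hbM : bbar K ∈ M K := Submodule.subset_span (by simp)
lemma habM : abar K * bbar K ∈ M K := Submodule.subset_span (by simp)
lemma h1N : (1 : EnvAlgebra K) ∈ N K := Submodule.subset_span (by simp)
lemma haN : abar K ∈ N K := Submodule.subset_span (by simp)
lemma hbN : bbar K ∈ N K := Submodule.subset_span (by simp)
lemma habN : abar K * bbar K ∈ N K := Submodule.subset_span (by simp)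
lemma M_le_N {u : EnvAlgebra K} (hu : u ∈ M K) : u ∈ N K := by
  refine Submodule.span_mono ?_ hu
  intro t ht
  simp only [Set.mem_insert_iff, Set.mem_singleton_iff] at ht ⊢
  tauto

lemma N_mul {u v : EnvAlgebra K} (hu : u ∈ N K) (hv : v ∈ N K) : u * v ∈ N K := by
  induction hu using Submodule.span_induction with
  | mem s hs =>
    induction hv using Submodule.span_induction with
    | mem t ht =>
      simp only [Set.mem_insert_iff, Set.mem_singleton_iff] at hs ht
      rcases hs with rfl | rfl | rfl | rfl <;> rcases ht with rfl | rfl | rfl | rfl <;>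
        (try simp only [one_mul, mul_one, haa, hbb, l_ba, laab, laba, lbab, labb, labab]) <;>
        first
          | exact zero_mem _
          | exact h1N
          | exact haN
          | exact hbN
          | exact habN
          | exact sub_mem habN haN
    | zero => rw [mul_zero]; exact zero_mem _
    | add p q _ _ hp hq => rw [mul_add]; exact add_mem hp hq
    | smul k p _ hp => rw [mul_smul_comm]; exact Submodule.smul_mem _ _ hp
  | zero => rw [zero_mul]; exact zero_mem _
  | add p q _ _ hp hq => rw [add_mul]; exact add_mem hp hq
  | smul k p _ hp => rw [smul_mul_assoc]; exact Submodule.smul_mem _ _ hp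

lemma N_top (u : EnvAlgebra K) : u ∈ N K := by
  obtain ⟨x, rfl⟩ := mk'_surjective u
  induction x using FreeAlgebra.induction with
  | grade0 r =>
    rw [Algebra.algebraMap_eq_smul_one]
    have h1 : (relationsIdeal K).ringCon.mk' (r • (1 : FreeAlgebra K (Fin 2)))
        = r • ((relationsIdeal K).ringCon.mk' (1 : FreeAlgebra K (Fin 2))) := rfl
    rw [h1, map_one]
    exact Submodule.smul_mem _ _ h1N
  | grade1 i =>
    fin_cases i
    · exact haN
    · exact hbN
  | mul x y hx hy => rw [map_mul]; exact N_mul hx hy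
  | add x y hx hy => rw [map_add]; exact add_mem hx hy

lemma M_mul_left (x : EnvAlgebra K) {y : EnvAlgebra K} (hy : y ∈ M K) : x * y ∈ M K := by
  have hx := N_top x
  induction hx using Submodule.span_induction with
  | mem s hs =>
    induction hy using Submodule.span_induction with
    | mem t ht =>
      simp only [Set.mem_insert_iff, Set.mem_singleton_iff] at hs ht
      rcases hs with rfl | rfl | rfl | rfl <;> rcases ht with rfl | rfl | rfl <;>
        (try simp only [one_mul, mul_one, haa, hbb, l_ba, laab, laba, lbab, labb, labab]) <;>
        first
          | exact zero_mem _
          | exact haM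
          | exact hbM
          | exact habM
          | exact sub_mem habM haM
    | zero => rw [mul_zero]; exact zero_mem _
    | add p q _ _ hp hq => rw [mul_add]; exact add_mem hp hq
    | smul k p _ hp => rw [mul_smul_comm]; exact Submodule.smul_mem _ _ hp
  | zero => rw [zero_mul]; exact zero_mem _
  | add p q _ _ hp hq => rw [add_mul]; exact add_mem hp hq
  | smul k p _ hp => rw [smul_mul_assoc]; exact Submodule.smul_mem _ _ hp

lemma M_mul_right {y : EnvAlgebra K} (hy : y ∈ M K) (x : EnvAlgebra K) : y * x ∈ M K := by
  have hx := N_top x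
  induction hx using Submodule.span_induction with
  | mem s hs =>
    induction hy using Submodule.span_induction with
    | mem t ht =>
      simp only [Set.mem_insert_iff, Set.mem_singleton_iff] at hs ht
      rcases ht with rfl | rfl | rfl <;> rcases hs with rfl | rfl | rfl | rfl <;>
        (try simp only [one_mul, mul_one, haa, hbb, l_ba, laab, laba, lbab, labb, labab]) <;>
        first
          | exact zero_mem _
          | exact haM
          | exact hbM
          | exact habM
          | exact sub_mem habM haM
    | zero => rw [zero_mul]; exact zero_mem _
    | add p q _ _ hp hq => rw [add_mul]; exact add_mem hp hq
    | smul k p _ hp => rw [smul_mul_assoc]; exact Submodule.smul_mem _ _ hp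
  | zero => rw [mul_zero]; exact zero_mem _
  | add p q _ _ hp hq => rw [mul_add]; exact add_mem hp hq
  | smul k p _ hp => rw [mul_smul_comm]; exact Submodule.smul_mem _ _ hp

/-- `ω ⊆ M` -/
lemma omega_le_M {w : EnvAlgebra K} (hw : w ∈ omegaIdeal K) : w ∈ M K := by
  have h := TwoSidedIdeal.mem_span_iff.mp hw
    (TwoSidedIdeal.mk' (M K : Set (EnvAlgebra K))
      (zero_mem _)
      (fun hx hy => add_mem hx hy)
      (fun hx => neg_mem hx)
      (fun hy => M_mul_left _ hy)
      (fun hx => M_mul_right hx _))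
    (by
      intro t ht
      simp only [Set.mem_insert_iff, Set.mem_singleton_iff] at ht
      rw [SetLike.mem_coe, TwoSidedIdeal.mem_mk']
      rcases ht with rfl | rfl
      · exact haM
      · exact hbM)
  rwa [TwoSidedIdeal.mem_mk'] at h

lemma M_mul_ab {w : EnvAlgebra K} (hw : w ∈ M K) : w * (abar K * bbar K) = 0 := by
  induction hw using Submodule.span_induction with
  | mem s hs =>
    simp only [Set.mem_insert_iff, Set.mem_singleton_iff] at hs
    rcases hs with rfl | rfl | rfl
    · exact laab
    · exact lbab
    · exact labab
  | zero => rw [zero_mul]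
  | add p q _ _ hp hq => rw [add_mul, hp, hq, add_zero]
  | smul k p _ hp => rw [smul_mul_assoc, hp, smul_zero]

lemma M_mul_a {w : EnvAlgebra K} (hw : w ∈ M K) :
    w * abar K ∈ Submodule.span K {abar K * bbar K - abar K} := by
  induction hw using Submodule.span_induction with
  | mem s hs =>
    simp only [Set.mem_insert_iff, Set.mem_singleton_iff] at hs
    rcases hs with rfl | rfl | rfl
    · rw [haa]; exact zero_mem _
    · rw [l_ba]; exact Submodule.subset_span rfl
    · rw [laba]; exact zero_mem _
  | zero => rw [zero_mul]; exact zero_mem _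
  | add p q _ _ hp hq => rw [add_mul]; exact add_mem hp hq
  | smul k p _ hp => rw [smul_mul_assoc]; exact Submodule.smul_mem _ _ hp

lemma absuba_mul_M {z : EnvAlgebra K} (hz : z ∈ M K) :
    (abar K * bbar K - abar K) * z = 0 := by
  induction hz using Submodule.span_induction with
  | mem s hs =>
    simp only [Set.mem_insert_iff, Set.mem_singleton_iff] at hs
    rcases hs with rfl | rfl | rfl
    · rw [sub_mul, laba, haa, sub_zero]
    · rw [sub_mul, labb, sub_self]
    · rw [sub_mul, labab, laab, sub_zero]
  | zero => rw [mul_zero]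
  | add p q _ _ hp hq => rw [mul_add, hp, hq, add_zero]
  | smul k p _ hp => rw [mul_smul_comm, hp, smul_zero]

lemma M_a_M {w z : EnvAlgebra K} (hw : w ∈ M K) (hz : z ∈ M K) :
    w * abar K * z = 0 := by
  obtain ⟨k, hk⟩ := Submodule.mem_span_singleton.mp (M_mul_a hw)
  rw [← hk, smul_mul_assoc, absuba_mul_M hz, smul_zero]

lemma M_ab_M {w z : EnvAlgebra K} (hw : w ∈ M K) (hz : z ∈ M K) :
    w * (abar K * bbar K) * z = 0 := by
  rw [M_mul_ab hw, zero_mul]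

lemma annih {c : EnvAlgebra K} (hc : c ∈ P K) {w z : EnvAlgebra K}
    (hw : w ∈ M K) (hz : z ∈ M K) : w * c * z = 0 := by
  induction hc using Submodule.span_induction with
  | mem s hs =>
    simp only [Set.mem_insert_iff, Set.mem_singleton_iff] at hs
    rcases hs with rfl | rfl
    · exact M_a_M hw hz
    · exact M_ab_M hw hz
  | zero => rw [mul_zero, zero_mul]
  | add p q _ _ hp hq => rw [mul_add, add_mul, hp, hq, add_zero]
  | smul k p _ hp => rw [mul_smul_comm, smul_mul_assoc, hp, smul_zero]

lemma comm_mem {x y : EnvAlgebra K} (hx : x ∈ M K) (hy : y ∈ M K) :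
    x * y - y * x ∈ P K := by
  induction hx using Submodule.span_induction with
  | mem s hs =>
    induction hy using Submodule.span_induction with
    | mem t ht =>
      have hPa : abar K ∈ P K := Submodule.subset_span (by simp)
      have hPab : abar K * bbar K ∈ P K := Submodule.subset_span (by simp)
      simp only [Set.mem_insert_iff, Set.mem_singleton_iff] at hs ht
      rcases hs with rfl | rfl | rfl <;> rcases ht with rfl | rfl | rfl
      · rw [sub_self]; exact zero_mem _
      · rw [l_ba, sub_sub_cancel]; exact hPa
      · rw [laab, laba, sub_zero]; exact zero_mem _
      · rw [l_ba, sub_sub_cancel_left]; exact neg_mem hPa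
      · rw [sub_self]; exact zero_mem _
      · rw [lbab, labb, zero_sub]; exact neg_mem hPab
      · rw [laab, laba, sub_zero]; exact zero_mem _
      · rw [labb, lbab, sub_zero]; exact hPab
      · rw [sub_self]; exact zero_mem _
    | zero =>
      rw [mul_zero, zero_mul, sub_zero]; exact zero_mem _
    | add p q _ _ hp hq =>
      have e : s * (p + q) - (p + q) * s = (s * p - p * s) + (s * q - q * s) := by
        rw [mul_add, add_mul]; abel
      rw [e]; exact add_mem hp hq
    | smul k p _ hp =>
      have e : s * (k • p) - (k • p) * s = k • (s * p - p * s) := by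
        rw [mul_smul_comm, smul_mul_assoc, smul_sub]
      rw [e]; exact Submodule.smul_mem _ _ hp
  | zero => rw [mul_zero, zero_mul, sub_zero]; exact zero_mem _
  | add p q _ _ hp hq =>
    have e : (p + q) * y - y * (p + q) = (p * y - y * p) + (q * y - y * q) := by
      rw [mul_add, add_mul]; abel
    rw [e]; exact add_mem hp hq
  | smul k p _ hp =>
    have e : (k • p) * y - y * (k • p) = k • (p * y - y * p) := by
      rw [mul_smul_comm, smul_mul_assoc, smul_sub]
    rw [e]; exact Submodule.smul_mem _ _ hp

end OmegaProof

/-- Proposition 3.2: if `K` has characteristic `2`, then `ω` satisfies the semigroup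
identity `w*x*y*z = w*y*x*z`. -/
theorem omega_satisfies_semigroup_identity (K : Type*) [Field K] [CharP K 2]
    (w x y z : EnvAlgebra K) (hw : w ∈ omegaIdeal K) (hx : x ∈ omegaIdeal K)
    (hy : y ∈ omegaIdeal K) (hz : z ∈ omegaIdeal K) :
    w * x * y * z = w * y * x * z := by
  have hw' := OmegaProof.omega_le_M hw
  have hx' := OmegaProof.omega_le_M hx
  have hy' := OmegaProof.omega_le_M hy
  have hz' := OmegaProof.omega_le_M hz
  have h := OmegaProof.annih (OmegaProof.comm_mem hx' hy') hw' hz'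
  have e : w * x * y * z - w * y * x * z = w * (x * y - y * x) * z := by
    noncomm_ring
  have h0 : w * x * y * z - w * y * x * z = 0 := e.trans h
  exact sub_eq_zero.mp h0
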